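/- Let G be a weighted graph with vertex sizes and a red/blue coloring, and let G' be obtained from G by deleting a set V^d of vertices of G (together with all edges incident to them), adding a set V of new vertices, and adding a set E of new weighted edges, where every edge of E is incident to a vertex of V and no edge of E is incident to a vertex of V^d; sizes and colors of vertices present in both graphs are unchanged. Let U ⊆ V(G') be the set of vertices of G' that either are not vertices of G or have different partition ids in G and in G'. Then U ⊆ V ∪ N_{G'}(V) ∪ (N_G(V^d) \ V^d). -/
import Mathlib


attribute [local instance] Classical.propDecidable

/-- A weighted graph: a finite simple graph on a subset of `ℕ`, where an edge joins `u` and `v`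
iff `w u v ≠ 0`, and every edge has a positive weight (`nonneg` together with adjacency
`w u v ≠ 0` makes edge weights positive). -/
structure WGraph where
  verts : Finset ℕ
  w : ℕ → ℕ → ℝ
  symm : ∀ u v, w u v = w v u
  nonneg : ∀ u v, 0 ≤ w u v
  loopless : ∀ v, w v v = 0
  supported : ∀ u v, w u v ≠ 0 → u ∈ verts ∧ v ∈ verts

namespace WGraph

/-- The set of neighbors `N_G(v)` of a vertex `v`. -/
noncomputable def nbrs (G : WGraph) (v : ℕ) : Finset ℕ :=
  G.verts.filter fun u => G.w v u ≠ 0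

/-- `N_G(U) = ⋃_{v ∈ U} N_G(v)`. -/
noncomputable def nbrsOf (G : WGraph) (U : Finset ℕ) : Finset ℕ :=
  U.biUnion G.nbrs

/-- `G'` is obtained from `G` by deleting the vertices of `Vd` (together with all incident
edges), adding the new vertices of `V`, and adding new weighted edges, each of which is
incident to a vertex of `V` and to no vertex of `Vd`; all surviving old edges keep
their weights. -/
structure IsUpdate (G G' : WGraph) (V Vd : Finset ℕ) : Prop where
  del_sub : Vd ⊆ G.verts
  new_not_old : ∀ x ∈ V, x ∉ G.verts
  verts_eq : G'.verts = (G.verts \ Vd) ∪ V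
  keep : ∀ u v, u ∉ Vd → v ∉ Vd → G.w u v ≠ 0 → G'.w u v = G.w u v
  new_edges : ∀ u v, G'.w u v ≠ 0 →
    (G.w u v ≠ 0 ∧ u ∉ Vd ∧ v ∉ Vd ∧ G'.w u v = G.w u v) ∨ (u ∈ V ∨ v ∈ V)

/-- Normalized weight `w̄(uv) = w(uv) / (S(u)·S(v))`. -/
noncomputable def nw (G : WGraph) (S : ℕ → ℕ) (u v : ℕ) : ℝ :=
  G.w u v / ((S u : ℝ) * (S v : ℝ))

/-- The red neighbors of `v` (`c u = true` means `u` is red). -/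
noncomputable def redNbrs (G : WGraph) (c : ℕ → Bool) (v : ℕ) : Finset ℕ :=
  (G.nbrs v).filter fun u => c u = true

/-- The partition id of `v`: if `v` is red or has no red neighbor it is `v` itself; otherwise
it is the red neighbor of `v` joined to `v` by the edge of highest normalized weight, ties
broken by taking the red neighbor with the smallest vertex index. -/
noncomputable def partitionId (G : WGraph) (S : ℕ → ℕ) (c : ℕ → Bool) (v : ℕ) : ℕ :=
  if h : c v = true ∨ ¬(G.redNbrs c v).Nonempty then v
  else
    ((G.redNbrs c v).filter fun u => ∀ u' ∈ G.redNbrs c v, G.nw S v u' ≤ G.nw S v u).min'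
      (by
        push_neg at h
        obtain ⟨u, hu, hmax⟩ :=
          Finset.exists_max_image (G.redNbrs c v) (fun u => G.nw S v u) h.2
        exact ⟨u, Finset.mem_filter.mpr ⟨hu, hmax⟩⟩)

/-- Let `G'` be obtained from `G` by deleting the vertices `Vd`, adding the
new vertices `V` and adding new weighted edges each incident to a vertex of `V` and to no
vertex of `Vd`, where sizes and colors of vertices present in both graphs are unchanged.
Then every vertex of `G'` that is not a vertex of `G` or whose partition id differs in `G`
and `G'` lies in `V ∪ N_{G'}(V) ∪ (N_G(Vd) \ Vd)`. -/
theorem changed_partitionId_subset (G G' : WGraph) (V Vd : Finset ℕ)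
    (S S' : ℕ → ℕ) (c c' : ℕ → Bool)
    (hS : ∀ x, 0 < S x) (hS' : ∀ x, 0 < S' x)
    (h : IsUpdate G G' V Vd)
    (hsize : ∀ x, x ∈ G.verts → x ∈ G'.verts → S x = S' x)
    (hcol : ∀ x, x ∈ G.verts → x ∈ G'.verts → c x = c' x) :
    ∀ u ∈ G'.verts,
      (u ∉ G.verts ∨ G.partitionId S c u ≠ G'.partitionId S' c' u) →
      u ∈ V ∪ G'.nbrsOf V ∪ (G.nbrsOf Vd \ Vd) := by
  intro u hu hchanged
  by_contra hcon
  simp only [Finset.mem_union, Finset.mem_sdiff, not_or, not_and, not_not] at hcon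
  obtain ⟨⟨huV, huN⟩, huVd⟩ := hcon
  -- u is an old vertex not in Vd
  have hu' : u ∈ G.verts ∧ u ∉ Vd := by
    have := h.verts_eq ▸ hu
    rcases Finset.mem_union.mp this with h1 | h1
    · exact Finset.mem_sdiff.mp h1
    · exact absurd h1 huV
  obtain ⟨huG, huVd'⟩ := hu'
  have hunotVd : u ∉ Vd := fun hx => huVd' hx
  -- weights around u agree
  have hw : ∀ x, G'.w u x = G.w u x := by
    intro x
    by_cases h1 : G'.w u x = 0
    · by_cases h2 : G.w u x = 0
      · rw [h1, h2]
      · -- x must be in Vd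
        have hxVd : x ∈ Vd := by
          by_contra hx
          have := h.keep u x hunotVd hx h2
          rw [this] at h1
          exact h2 h1
        -- then u ∈ N_G(Vd), hence u ∈ Vd, contradiction with x ∉ Vd? no: contradiction with huVd'
        have humem : u ∈ G.nbrsOf Vd := by
          refine Finset.mem_biUnion.mpr ⟨x, hxVd, ?_⟩
          refine Finset.mem_filter.mpr ⟨huG, ?_⟩
          rw [G.symm x u]; exact h2
        exact absurd (huVd humem) huVd'
    · rcases h.new_edges u x h1 with ⟨_, _, _, heq⟩ | (hx | hx)
      · exact heq
      · exact absurd hx huV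
      · exfalso
        apply huN
        refine Finset.mem_biUnion.mpr ⟨x, hx, ?_⟩
        refine Finset.mem_filter.mpr ⟨hu, ?_⟩
        rw [G'.symm x u]; exact h1
  -- neighborhoods agree
  have hnbrs : G'.nbrs u = G.nbrs u := by
    ext x
    simp only [nbrs, Finset.mem_filter]
    constructor
    · rintro ⟨-, hx⟩
      rw [hw x] at hx
      exact ⟨(G.supported u x hx).2, hx⟩
    · rintro ⟨-, hx⟩
      rw [← hw x] at hx
      exact ⟨(G'.supported u x hx).2, hx⟩
  have hboth : ∀ x ∈ G.nbrs u, x ∈ G.verts ∧ x ∈ G'.verts := by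
    intro x hx
    have hx2 := (Finset.mem_filter.mp hx).2
    refine ⟨(Finset.mem_filter.mp hx).1, ?_⟩
    have : G'.w u x ≠ 0 := by rw [hw x]; exact hx2
    exact (G'.supported u x this).2
  have hcc : ∀ x ∈ G.nbrs u, c x = c' x := fun x hx =>
    hcol x (hboth x hx).1 (hboth x hx).2
  have hSS : ∀ x ∈ G.nbrs u, S x = S' x := fun x hx =>
    hsize x (hboth x hx).1 (hboth x hx).2
  have hSu : S u = S' u := hsize u huG hu
  have hcu : c u = c' u := hcol u huG hu
  have hred : G'.redNbrs c' u = G.redNbrs c u := by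
    unfold redNbrs
    rw [hnbrs]
    apply Finset.filter_congr
    intro x hx
    rw [hcc x hx]
  have hnw : ∀ x ∈ G.nbrs u, G'.nw S' u x = G.nw S u x := by
    intro x hx
    unfold nw
    rw [hw x, hSu, hSS x hx]
  have hredsub : ∀ x ∈ G.redNbrs c u, x ∈ G.nbrs u := by
    intro x hx; exact (Finset.mem_filter.mp hx).1
  have hfil : ((G'.redNbrs c' u).filter fun x =>
        ∀ u' ∈ G'.redNbrs c' u, G'.nw S' u u' ≤ G'.nw S' u x)
      = ((G.redNbrs c u).filter fun x =>
        ∀ u' ∈ G.redNbrs c u, G.nw S u u' ≤ G.nw S u x) := by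
    rw [hred]
    apply Finset.filter_congr
    intro x hx
    constructor
    · intro hall u' hu'
      have := hall u' hu'
      rwa [hnw x (hredsub x hx), hnw u' (hredsub u' hu')] at this
    · intro hall u' hu'
      rw [hnw x (hredsub x hx), hnw u' (hredsub u' hu')]
      exact hall u' hu'
  have hcond : (c u = true ∨ ¬(G.redNbrs c u).Nonempty) ↔
      (c' u = true ∨ ¬(G'.redNbrs c' u).Nonempty) := by
    rw [hred, hcu]
  have key : G.partitionId S c u = G'.partitionId S' c' u := by
    by_cases hC : c u = true ∨ ¬(G.redNbrs c u).Nonempty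
    · rw [partitionId, partitionId, dif_pos hC, dif_pos (hcond.mp hC)]
    · rw [partitionId, partitionId, dif_neg hC,
        dif_neg (fun hC' => hC (hcond.mpr hC'))]
      apply le_antisymm
      · exact Finset.min'_le _ _ (by rw [← hfil]; exact Finset.min'_mem _ _)
      · exact Finset.min'_le _ _ (by rw [hfil]; exact Finset.min'_mem _ _)
  rcases hchanged with h1 | h1
  · exact h1 huG
  · exact h1 key

end WGraph
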